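/- Let E be a relation on Fin n and let M be any matching of B(E), with f the associated partial injective function (domain D, range R). Set I = Fin n \ R and J = Fin n \ D. Then the input-augmented bipartite graph (B(E) plus left vertices {u_s : s ∈ I}, each u_s adjacent only to right vertex s) has a matching of size n, and the output-augmented bipartite graph (B(E) plus right vertices {y_s : s ∈ J}, each y_s adjacent only to left vertex s) has a matching of size n. In particular, if f decomposes into cycles, p chains, and u isolated vertices, this produces a feasible input/output placement with |I ∪ J| = 2p + u. -/

import Mathlib

def IsBMatching {α β : Type*} (Adj : α → β → Prop) (M : Finset (α × β)) : Prop :=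
  (∀ p ∈ M, Adj p.1 p.2) ∧
  (∀ p ∈ M, ∀ q ∈ M, p.1 = q.1 → p = q) ∧
  (∀ p ∈ M, ∀ q ∈ M, p.2 = q.2 → p = q)

def AdjIn {n : ℕ} (E : Fin n → Fin n → Prop) (S : Finset (Fin n)) :
    (Fin n ⊕ Fin n) → Fin n → Prop := fun a j =>
  match a with
  | Sum.inl i => E i j
  | Sum.inr s => s ∈ S ∧ s = j

def AdjOut {n : ℕ} (E : Fin n → Fin n → Prop) (S : Finset (Fin n)) :
    Fin n → (Fin n ⊕ Fin n) → Prop := fun i b =>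
  match b with
  | Sum.inl j => E i j
  | Sum.inr s => s ∈ S ∧ i = s

section aux

set_option linter.unusedSectionVars false

variable {α : Type*} [Inhabited α]

lemma headI_mem_aux {l : List α} (h : l ≠ []) : l.headI ∈ l := by
  obtain ⟨a, t, rfl⟩ := List.exists_cons_of_ne_nil h; simp

lemma getLastI_mem_aux {l : List α} (h : l ≠ []) : l.getLastI ∈ l := by
  rw [List.getLastI_eq_getLast?, List.getLast?_eq_getLast h]
  exact List.getLast_mem h

lemma head?_eq_headI {l : List α} (h : l ≠ []) : l.head? = some l.headI := by
  obtain ⟨a, t, rfl⟩ := List.exists_cons_of_ne_nil h; rfl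

lemma getLast?_eq_getLastI {l : List α} (h : l ≠ []) : l.getLast? = some l.getLastI := by
  rw [List.getLastI_eq_getLast?, List.getLast?_eq_getLast h]; rfl

lemma getLastI_eq_get {l : List α} (h : l ≠ []) :
    l.getLastI = l.get ⟨l.length - 1, by cases l; simp at h; simp⟩ := by
  rw [List.getLastI_eq_getLast?, List.getLast?_eq_getLast h]
  simp [List.getLast_eq_getElem]

-- a non-head element of a chain has a predecessor in the list
lemma mem_snd_of_ne_headI {R : α → α → Prop} {l : List α} (hc : l.Chain' R)
    {v : α} (hv : v ∈ l) (hne : v ≠ l.headI) : ∃ u ∈ l, R u v := by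
  obtain ⟨a, t, rfl⟩ := List.exists_cons_of_ne_nil (List.ne_nil_of_mem hv)
  have hvt : v ∈ t := by
    rcases List.mem_cons.mp hv with h | h
    · exact absurd h hne
    · exact h
  obtain ⟨k, hkv⟩ := List.mem_iff_get.mp hvt
  replace hc : ∀ (i : ℕ) (h : i < (a :: t).length - 1),
      R ((a :: t).get ⟨i, by omega⟩) ((a :: t).get ⟨i + 1, by omega⟩) :=
    fun i h => List.isChain_iff_getElem.mp hc i (by omega)
  have hlt : (k : ℕ) < (a :: t).length - 1 := by simpa using k.isLt
  have hrel := hc k hlt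
  have h2 : ((a :: t).get ⟨(k : ℕ) + 1, by simp [k.isLt]⟩) = v := by
    simpa using hkv
  exact ⟨_, List.get_mem _ _, h2 ▸ hrel⟩

-- a non-last element of a chain has a successor in the list
lemma mem_fst_of_ne_getLastI {R : α → α → Prop} {l : List α} (hc : l.Chain' R)
    {v : α} (hv : v ∈ l) (hne : v ≠ l.getLastI) : ∃ u ∈ l, R v u := by
  have hne' : l ≠ [] := List.ne_nil_of_mem hv
  obtain ⟨k, hkv⟩ := List.mem_iff_get.mp hv
  replace hc : ∀ (i : ℕ) (h : i < l.length - 1),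
      R (l.get ⟨i, by omega⟩) (l.get ⟨i + 1, by omega⟩) :=
    fun i h => List.isChain_iff_getElem.mp hc i (by omega)
  have hklt : (k : ℕ) < l.length - 1 := by
    rcases lt_or_eq_of_le (Nat.le_sub_one_of_lt k.isLt) with h | h
    · exact h
    · exfalso
      apply hne
      rw [getLastI_eq_get hne', ← hkv]
      congr 1
      exact Fin.ext h
  have hrel := hc k hklt
  rw [show l.get ⟨(k : ℕ), by omega⟩ = v from by rw [← hkv]] at hrel
  exact ⟨_, List.get_mem _ _, hrel⟩

end aux

theorem stmt10 {n : ℕ} (E : Fin n → Fin n → Prop) (M : Finset (Fin n × Fin n))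
    (hM : IsBMatching E M)
    (D R I J : Finset (Fin n))
    (hD : D = M.image Prod.fst) (hR : R = M.image Prod.snd)
    (hI : I = Finset.univ \ R) (hJ : J = Finset.univ \ D) :
    (∃ M' : Finset ((Fin n ⊕ Fin n) × Fin n), IsBMatching (AdjIn E I) M' ∧ M'.card = n) ∧
    (∃ M' : Finset (Fin n × (Fin n ⊕ Fin n)), IsBMatching (AdjOut E J) M' ∧ M'.card = n) ∧
    -- if the partial injective function associated with M decomposes into cycles,
    -- p chains, and u isolated vertices, then |I ∪ J| = 2p + u
    (∀ (C : Finset (Fin n)) (chains : Finset (List (Fin n))) (Iso : Finset (Fin n)),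
      (∀ i ∈ C, ∃ j ∈ C, (i, j) ∈ M) →
      (∀ j ∈ C, ∃ i ∈ C, (i, j) ∈ M) →
      (∀ c ∈ chains, c.Nodup ∧ 2 ≤ c.length ∧
        c.Chain' (fun a b => (a, b) ∈ M) ∧
        (∀ a, c.head? = some a → a ∉ R) ∧
        (∀ b, c.getLast? = some b → b ∉ D)) →
      (∀ v ∈ Iso, v ∉ D ∧ v ∉ R) →
      (∀ c ∈ chains, ∀ v : Fin n, v ∈ c → v ∉ C ∧ v ∉ Iso) →
      (∀ v ∈ C, v ∉ Iso) →
      (∀ c ∈ chains, ∀ c' ∈ chains, c ≠ c' → ∀ v : Fin n, v ∈ c → v ∉ c') →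
      (∀ v : Fin n, v ∈ C ∨ v ∈ Iso ∨ ∃ c ∈ chains, v ∈ c) →
      (I ∪ J).card = 2 * chains.card + Iso.card) := by
  obtain ⟨hAdj, hfst, hsnd⟩ := hM
  have hRcard : R.card = M.card := by
    rw [hR]; exact Finset.card_image_of_injOn (fun p hp q hq h => hsnd p hp q hq h)
  have hDcard : D.card = M.card := by
    rw [hD]; exact Finset.card_image_of_injOn (fun p hp q hq h => hfst p hp q hq h)
  refine ⟨?_, ?_, ?_⟩
  · -- input-augmented
    refine ⟨M.image (fun p => (Sum.inl p.1, p.2)) ∪ I.image (fun s => (Sum.inr s, s)), ?_, ?_⟩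
    · refine ⟨?_, ?_, ?_⟩
      · intro p hp
        rcases Finset.mem_union.mp hp with h | h
        · obtain ⟨q, hq, rfl⟩ := Finset.mem_image.mp h
          exact hAdj q hq
        · obtain ⟨s, hs, rfl⟩ := Finset.mem_image.mp h
          exact ⟨hs, rfl⟩
      · intro p hp q hq h
        rcases Finset.mem_union.mp hp with h1 | h1 <;> rcases Finset.mem_union.mp hq with h2 | h2
        · obtain ⟨a, ha, rfl⟩ := Finset.mem_image.mp h1
          obtain ⟨b, hb, rfl⟩ := Finset.mem_image.mp h2
          simp only [Sum.inl.injEq] at h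
          have := hfst a ha b hb h
          rw [this]
        · obtain ⟨a, _, rfl⟩ := Finset.mem_image.mp h1
          obtain ⟨b, _, rfl⟩ := Finset.mem_image.mp h2
          simp at h
        · obtain ⟨a, _, rfl⟩ := Finset.mem_image.mp h1
          obtain ⟨b, _, rfl⟩ := Finset.mem_image.mp h2
          simp at h
        · obtain ⟨a, _, rfl⟩ := Finset.mem_image.mp h1
          obtain ⟨b, _, rfl⟩ := Finset.mem_image.mp h2
          simp only [Sum.inr.injEq] at h
          rw [h]
      · intro p hp q hq h
        rcases Finset.mem_union.mp hp with h1 | h1 <;> rcases Finset.mem_union.mp hq with h2 | h2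
        · obtain ⟨a, ha, rfl⟩ := Finset.mem_image.mp h1
          obtain ⟨b, hb, rfl⟩ := Finset.mem_image.mp h2
          have := hsnd a ha b hb h
          rw [this]
        · obtain ⟨a, ha, rfl⟩ := Finset.mem_image.mp h1
          obtain ⟨b, hb, rfl⟩ := Finset.mem_image.mp h2
          simp only at h
          exfalso
          rw [hI, Finset.mem_sdiff] at hb
          exact hb.2 (h ▸ (hR ▸ Finset.mem_image_of_mem Prod.snd ha))
        · obtain ⟨a, ha, rfl⟩ := Finset.mem_image.mp h1
          obtain ⟨b, hb, rfl⟩ := Finset.mem_image.mp h2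
          simp only at h
          exfalso
          rw [hI, Finset.mem_sdiff] at ha
          exact ha.2 (h ▸ (hR ▸ Finset.mem_image_of_mem Prod.snd hb))
        · obtain ⟨a, _, rfl⟩ := Finset.mem_image.mp h1
          obtain ⟨b, _, rfl⟩ := Finset.mem_image.mp h2
          simp only at h
          rw [h]
    · rw [Finset.card_union_of_disjoint, Finset.card_image_of_injective,
        Finset.card_image_of_injective]
      · have hIcard : I.card = n - R.card := by
          rw [hI, Finset.card_sdiff_of_subset (Finset.subset_univ R)]; simp
        have hRle : R.card ≤ n := by
          have := Finset.card_le_univ R; simpa using this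
        omega
      · intro a b h; simpa using h
      · intro a b h
        simp only [Prod.mk.injEq, Sum.inl.injEq] at h
        exact Prod.ext h.1 h.2
      · rw [Finset.disjoint_left]
        rintro p hp hq
        obtain ⟨a, _, rfl⟩ := Finset.mem_image.mp hp
        obtain ⟨b, _, hb⟩ := Finset.mem_image.mp hq
        simp at hb
  · -- output-augmented
    refine ⟨M.image (fun p => (p.1, Sum.inl p.2)) ∪ J.image (fun s => (s, Sum.inr s)), ?_, ?_⟩
    · refine ⟨?_, ?_, ?_⟩
      · intro p hp
        rcases Finset.mem_union.mp hp with h | h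
        · obtain ⟨q, hq, rfl⟩ := Finset.mem_image.mp h
          exact hAdj q hq
        · obtain ⟨s, hs, rfl⟩ := Finset.mem_image.mp h
          exact ⟨hs, rfl⟩
      · intro p hp q hq h
        rcases Finset.mem_union.mp hp with h1 | h1 <;> rcases Finset.mem_union.mp hq with h2 | h2
        · obtain ⟨a, ha, rfl⟩ := Finset.mem_image.mp h1
          obtain ⟨b, hb, rfl⟩ := Finset.mem_image.mp h2
          have := hfst a ha b hb h
          rw [this]
        · obtain ⟨a, ha, rfl⟩ := Finset.mem_image.mp h1
          obtain ⟨b, hb, rfl⟩ := Finset.mem_image.mp h2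
          simp only at h
          exfalso
          rw [hJ, Finset.mem_sdiff] at hb
          exact hb.2 (h ▸ (hD ▸ Finset.mem_image_of_mem Prod.fst ha))
        · obtain ⟨a, ha, rfl⟩ := Finset.mem_image.mp h1
          obtain ⟨b, hb, rfl⟩ := Finset.mem_image.mp h2
          simp only at h
          exfalso
          rw [hJ, Finset.mem_sdiff] at ha
          exact ha.2 (h ▸ (hD ▸ Finset.mem_image_of_mem Prod.fst hb))
        · obtain ⟨a, _, rfl⟩ := Finset.mem_image.mp h1
          obtain ⟨b, _, rfl⟩ := Finset.mem_image.mp h2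
          simp only at h
          rw [h]
      · intro p hp q hq h
        rcases Finset.mem_union.mp hp with h1 | h1 <;> rcases Finset.mem_union.mp hq with h2 | h2
        · obtain ⟨a, ha, rfl⟩ := Finset.mem_image.mp h1
          obtain ⟨b, hb, rfl⟩ := Finset.mem_image.mp h2
          simp only [Sum.inl.injEq] at h
          have := hsnd a ha b hb h
          rw [this]
        · obtain ⟨a, _, rfl⟩ := Finset.mem_image.mp h1
          obtain ⟨b, _, rfl⟩ := Finset.mem_image.mp h2
          simp at h
        · obtain ⟨a, _, rfl⟩ := Finset.mem_image.mp h1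
          obtain ⟨b, _, rfl⟩ := Finset.mem_image.mp h2
          simp at h
        · obtain ⟨a, _, rfl⟩ := Finset.mem_image.mp h1
          obtain ⟨b, _, rfl⟩ := Finset.mem_image.mp h2
          simp only [Sum.inr.injEq] at h
          rw [h]
    · rw [Finset.card_union_of_disjoint, Finset.card_image_of_injective,
        Finset.card_image_of_injective]
      · have hJcard : J.card = n - D.card := by
          rw [hJ, Finset.card_sdiff_of_subset (Finset.subset_univ D)]; simp
        have hDle : D.card ≤ n := by
          have := Finset.card_le_univ D; simpa using this
        omega
      · intro a b h; simpa using h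
      · intro a b h
        simp only [Prod.mk.injEq, Sum.inl.injEq] at h
        exact Prod.ext h.1 h.2
      · rw [Finset.disjoint_left]
        rintro p hp hq
        obtain ⟨a, _, rfl⟩ := Finset.mem_image.mp hp
        obtain ⟨b, _, hb⟩ := Finset.mem_image.mp hq
        simp at hb
  · -- counting
    intro C chains Iso hC1 hC2 hch hIso hdisj1 hdisj2 hdisj3 hcover
    have hRmem : ∀ (v i : Fin n), (i, v) ∈ M → v ∈ R := by
      intro v i h; rw [hR]; exact Finset.mem_image_of_mem Prod.snd h
    have hDmem : ∀ (v j : Fin n), (v, j) ∈ M → v ∈ D := by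
      intro v j h; rw [hD]; exact Finset.mem_image_of_mem Prod.fst h
    rcases n with _ | m
    · -- n = 0 : everything is empty
      have hch0 : chains = ∅ := by
        rw [Finset.eq_empty_iff_forall_notMem]
        intro c hc
        have hlen := (hch c hc).2.1
        rcases c with _ | ⟨a, t⟩
        · simp at hlen
        · exact a.elim0
      have h1 : I ∪ J = ∅ := Finset.eq_empty_of_isEmpty _
      have h2 : Iso = ∅ := Finset.eq_empty_of_isEmpty _
      simp [h1, h2, hch0]
    · -- n = m + 1, so Fin n is inhabited
      have hcne : ∀ c ∈ chains, c ≠ [] := by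
        intro c hc h
        have := (hch c hc).2.1
        rw [h] at this; simp at this
      have hhdD : ∀ c ∈ chains, c.headI ∈ D := by
        intro c hc
        obtain ⟨nd, hlen, hchain, -, -⟩ := hch c hc
        obtain ⟨a, t, rfl⟩ := List.exists_cons_of_ne_nil (hcne c hc)
        obtain ⟨b, t', rfl⟩ := List.exists_cons_of_ne_nil (show t ≠ [] by
          intro h; rw [h] at hlen; simp at hlen)
        have hab : (a, b) ∈ M := (List.isChain_cons_cons.mp hchain).1
        simpa using hDmem a b hab
      have hhdR : ∀ c ∈ chains, c.headI ∉ R := fun c hc =>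
        (hch c hc).2.2.2.1 _ (head?_eq_headI (hcne c hc))
      have hlstD : ∀ c ∈ chains, c.getLastI ∉ D := fun c hc =>
        (hch c hc).2.2.2.2 _ (getLast?_eq_getLastI (hcne c hc))
      have hIeq : I = Iso ∪ chains.image List.headI := by
        ext v
        simp only [Finset.mem_union, Finset.mem_image, hI, Finset.mem_sdiff, Finset.mem_univ,
          true_and]
        constructor
        · intro hvR
          rcases hcover v with h | h | ⟨c, hc, hvc⟩
          · obtain ⟨i, -, hiv⟩ := hC2 v h
            exact absurd (hRmem v i hiv) hvR
          · exact Or.inl h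
          · by_cases hv : v = c.headI
            · exact Or.inr ⟨c, hc, hv.symm⟩
            · obtain ⟨u, -, hu⟩ := mem_snd_of_ne_headI (hch c hc).2.2.1 hvc hv
              exact absurd (hRmem v u hu) hvR
        · rintro (h | ⟨c, hc, rfl⟩)
          · exact (hIso v h).2
          · exact hhdR c hc
      have hJeq : J = Iso ∪ chains.image List.getLastI := by
        ext v
        simp only [Finset.mem_union, Finset.mem_image, hJ, Finset.mem_sdiff, Finset.mem_univ,
          true_and]
        constructor
        · intro hvD
          rcases hcover v with h | h | ⟨c, hc, hvc⟩
          · obtain ⟨j, -, hvj⟩ := hC1 v h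
            exact absurd (hDmem v j hvj) hvD
          · exact Or.inl h
          · by_cases hv : v = c.getLastI
            · exact Or.inr ⟨c, hc, hv.symm⟩
            · obtain ⟨u, -, hu⟩ := mem_fst_of_ne_getLastI (hch c hc).2.2.1 hvc hv
              exact absurd (hDmem v u hu) hvD
        · rintro (h | ⟨c, hc, rfl⟩)
          · exact (hIso v h).1
          · exact hlstD c hc
      have hIJ : I ∩ J = Iso := by
        ext v
        simp only [Finset.mem_inter, hI, hJ, Finset.mem_sdiff, Finset.mem_univ, true_and]
        constructor
        · rintro ⟨hvR, hvD⟩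
          rcases hcover v with h | h | ⟨c, hc, hvc⟩
          · obtain ⟨i, -, hiv⟩ := hC2 v h
            exact absurd (hRmem v i hiv) hvR
          · exact h
          · exfalso
            by_cases hv : v = c.headI
            · exact hvD (hv ▸ hhdD c hc)
            · obtain ⟨u, -, hu⟩ := mem_snd_of_ne_headI (hch c hc).2.2.1 hvc hv
              exact hvR (hRmem v u hu)
        · intro h
          exact ⟨(hIso v h).2, (hIso v h).1⟩
      have hheadinj : Set.InjOn (List.headI : List (Fin (m+1)) → Fin (m+1)) ↑chains := by
        intro c hc c' hc' h
        by_contra hne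
        exact hdisj3 c hc c' hc' hne _ (headI_mem_aux (hcne c hc))
          (by rw [h]; exact headI_mem_aux (hcne c' hc'))
      have hlastinj : Set.InjOn (List.getLastI : List (Fin (m+1)) → Fin (m+1)) ↑chains := by
        intro c hc c' hc' h
        by_contra hne
        exact hdisj3 c hc c' hc' hne _ (getLastI_mem_aux (hcne c hc))
          (by rw [h]; exact getLastI_mem_aux (hcne c' hc'))
      have hdisjH : Disjoint Iso (chains.image List.headI) := by
        rw [Finset.disjoint_left]
        intro v hvIso hvim
        obtain ⟨c, hc, rfl⟩ := Finset.mem_image.mp hvim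
        exact (hdisj1 c hc _ (headI_mem_aux (hcne c hc))).2 hvIso
      have hdisjL : Disjoint Iso (chains.image List.getLastI) := by
        rw [Finset.disjoint_left]
        intro v hvIso hvim
        obtain ⟨c, hc, rfl⟩ := Finset.mem_image.mp hvim
        exact (hdisj1 c hc _ (getLastI_mem_aux (hcne c hc))).2 hvIso
      have hIcard : I.card = Iso.card + chains.card := by
        rw [hIeq, Finset.card_union_of_disjoint hdisjH, Finset.card_image_of_injOn hheadinj]
      have hJcard : J.card = Iso.card + chains.card := by
        rw [hJeq, Finset.card_union_of_disjoint hdisjL, Finset.card_image_of_injOn hlastinj]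
      have hkey := Finset.card_union_add_card_inter I J
      rw [hIJ] at hkey
      omega
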